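/- Let b be a connected locally finite graph over (X,m), let S > 0, and suppose b is (√2·S)-regular. Define ρ_S(x,y) := sup{ρ(x,y) : ρ is an intrinsic pseudo-metric with jump size at most S}. Then √2 · ρ_S(x,y) ≥ ρ_ℰ(x,y) for all x, y ∈ X. -/

import Mathlib

noncomputable section

/-- A pseudo-metric on the vertex set. -/
def IsPseudoMetric {X : Type*} (ρ : X → X → ℝ) : Prop :=
  (∀ x, ρ x x = 0) ∧ (∀ x y, 0 ≤ ρ x y) ∧ (∀ x y, ρ x y = ρ y x) ∧
    ∀ x y z, ρ x z ≤ ρ x y + ρ y z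

/-- A pseudo-metric `ρ` is intrinsic if `Σ_y b(x,y) ρ(x,y)² ≤ m(x)` for all `x`. -/
def IsIntrinsic {X : Type*} (b : X → X → ℝ) (m : X → ℝ) (ρ : X → X → ℝ) : Prop :=
  ∀ x, ∑' y, b x y * ρ x y ^ 2 ≤ m x

/-- The jump size of `ρ` is at most `S`. -/
def JumpLE {X : Type*} (b : X → X → ℝ) (ρ : X → X → ℝ) (S : ℝ) : Prop :=
  ∀ x y, 0 < b x y → ρ x y ≤ S

/-- The energy density `Γ(f)(x) = (1/(2m(x))) Σ_y b(x,y)(f(x) − f(y))²`. -/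
def gammaDensity {X : Type*} (b : X → X → ℝ) (m : X → ℝ) (f : X → ℝ) (x : X) : ℝ :=
  (2 * m x)⁻¹ * ∑' y, b x y * (f x - f y) ^ 2

/-- A graph is `T`-regular if `|ψ(x) − ψ(y)| ≤ T` for all neighbors `x ~ y` and every finitely
supported `ψ` with `‖Γ(ψ)‖_∞ ≤ 1`. -/
def SRegular {X : Type*} (b : X → X → ℝ) (m : X → ℝ) (T : ℝ) : Prop :=
  ∀ ψ : X → ℝ, (Function.support ψ).Finite → (∀ z, gammaDensity b m ψ z ≤ 1) →
    ∀ x y, 0 < b x y → |ψ x - ψ y| ≤ T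

/-- `ρ_ℰ(x,y) = sup{|ψ(x) − ψ(y)| : ψ finitely supported, ‖Γ(ψ)‖_∞ ≤ 1}`. -/
def rhoE {X : Type*} (b : X → X → ℝ) (m : X → ℝ) (x y : X) : ℝ :=
  sSup {r | ∃ ψ : X → ℝ, (Function.support ψ).Finite ∧ (∀ z, gammaDensity b m ψ z ≤ 1) ∧
    r = |ψ x - ψ y|}

/-- `ρ_S(x,y)`: supremum of `ρ(x,y)` over all intrinsic pseudo-metrics with jump size at most
`S`. -/
def rhoS {X : Type*} (b : X → X → ℝ) (m : X → ℝ) (S : ℝ) (x y : X) : ℝ :=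
  sSup {r | ∃ ρ : X → X → ℝ, IsPseudoMetric ρ ∧ IsIntrinsic b m ρ ∧ JumpLE b ρ S ∧ r = ρ x y}

theorem stmt15 {X : Type*} [Countable X]
    (b : X → X → ℝ) (m : X → ℝ)
    (hb_nonneg : ∀ x y, 0 ≤ b x y) (hb_symm : ∀ x y, b x y = b y x)
    (hb_loop : ∀ x, b x x = 0)
    (hlf : ∀ x, (Function.support (b x)).Finite)
    (hm_pos : ∀ x, 0 < m x)
    (hconn : ∀ x y, Relation.ReflTransGen (fun u v => 0 < b u v) x y)
    (S : ℝ) (hS : 0 < S)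
    (hreg : SRegular b m (Real.sqrt 2 * S)) :
    ∀ x y : X, rhoE b m x y ≤ Real.sqrt 2 * rhoS b m S x y := by
  intro x y
  have hs2 : (0:ℝ) < Real.sqrt 2 := Real.sqrt_pos.mpr (by norm_num)
  -- bound on ρ x z for intrinsic pseudo-metrics with jump ≤ S, via connectivity
  have key : ∀ z : X, ∃ C : ℝ, ∀ ρ : X → X → ℝ, IsPseudoMetric ρ → IsIntrinsic b m ρ →
      JumpLE b ρ S → ρ x z ≤ C := by
    intro z
    induction hconn x z with
    | refl => exact ⟨0, fun ρ hpm _ _ => le_of_eq (hpm.1 x)⟩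
    | tail hab hbz ih =>
      obtain ⟨C, hC⟩ := ih
      exact ⟨C + S, fun ρ hpm hi hj =>
        (hpm.2.2.2 x _ _).trans (add_le_add (hC ρ hpm hi hj) (hj _ _ hbz))⟩
  obtain ⟨C, hC⟩ := key y
  have hbdd : BddAbove {r | ∃ ρ : X → X → ℝ, IsPseudoMetric ρ ∧ IsIntrinsic b m ρ ∧
      JumpLE b ρ S ∧ r = ρ x y} := by
    refine ⟨C, ?_⟩
    rintro r ⟨ρ, h1, h2, h3, rfl⟩
    exact hC ρ h1 h2 h3
  -- the zero metric is in the set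
  have hzero : (0:ℝ) ∈ {r | ∃ ρ : X → X → ℝ, IsPseudoMetric ρ ∧ IsIntrinsic b m ρ ∧
      JumpLE b ρ S ∧ r = ρ x y} := by
    refine ⟨fun _ _ => 0, ⟨fun _ => rfl, fun _ _ => le_refl 0, fun _ _ => rfl,
      fun _ _ _ => by norm_num⟩, ?_, fun _ _ _ => hS.le, rfl⟩
    intro u
    simp [(hm_pos u).le]
  have hrhoS_nonneg : 0 ≤ rhoS b m S x y := le_csSup hbdd hzero
  apply Real.sSup_le
  · rintro r ⟨ψ, hfin, hΓ, rfl⟩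
    set ρ : X → X → ℝ := fun u v => |ψ u - ψ v| / Real.sqrt 2 with hρ
    have hpm : IsPseudoMetric ρ := by
      refine ⟨fun u => by simp [hρ], fun u v => by positivity, fun u v => by
        simp [hρ, abs_sub_comm], fun u v w => ?_⟩
      have := abs_sub_le (ψ u) (ψ v) (ψ w)
      simp only [hρ]
      rw [← add_div]
      exact div_le_div_of_nonneg_right this hs2.le |>.trans_eq rfl
    have hint : IsIntrinsic b m ρ := by
      intro u
      have hterm : ∀ v, b u v * ρ u v ^ 2 = (b u v * (ψ u - ψ v) ^ 2) * (2:ℝ)⁻¹ := by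
        intro v
        simp only [hρ]
        rw [div_pow, sq_abs, Real.sq_sqrt (by norm_num : (2:ℝ) ≥ 0)]
        ring
      have hsum : ∑' v, b u v * ρ u v ^ 2 = (∑' v, b u v * (ψ u - ψ v) ^ 2) * (2:ℝ)⁻¹ := by
        simp_rw [hterm]
        exact tsum_mul_right
      have hT : ∑' v, b u v * (ψ u - ψ v) ^ 2 ≤ 2 * m u := by
        have h := hΓ u
        unfold gammaDensity at h
        have h2m : (0:ℝ) < 2 * m u := by linarith [hm_pos u]
        rw [inv_mul_le_iff₀ h2m] at h
        linarith
      rw [hsum]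
      nlinarith [hm_pos u]
    have hjump : JumpLE b ρ S := by
      intro u v hb
      have := hreg ψ hfin hΓ u v hb
      simp only [hρ]
      rw [div_le_iff₀ hs2]
      linarith [this]
    have hmem : ρ x y ∈ {r | ∃ ρ' : X → X → ℝ, IsPseudoMetric ρ' ∧ IsIntrinsic b m ρ' ∧
        JumpLE b ρ' S ∧ r = ρ' x y} := ⟨ρ, hpm, hint, hjump, rfl⟩
    have hle : ρ x y ≤ rhoS b m S x y := le_csSup hbdd hmem
    have heq : |ψ x - ψ y| = Real.sqrt 2 * ρ x y := by
      simp only [hρ]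
      field_simp
    rw [heq]
    exact mul_le_mul_of_nonneg_left hle hs2.le
  · exact mul_nonneg hs2.le hrhoS_nonneg

end
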